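/- Let (G, μ, ω) be an infinite, connected, locally finite weighted graph, and d an intrinsic pseudo metric with finite jump size s which is also 1-intrinsic with bound C₀ (Σ_y ω(x,y)d(x,y) ≤ C₀μ(x)), with all balls finite. Let V(x) ≥ c₀[d(x,x₀)+k]^(-α) for some c₀ > 0, k > s, 0 < α ≤ 1. Let u solve Δu = Vu on G with Σ_x |u(x)|^p[d(x,x₀)+k]^(-β)μ(x) < ∞ for some β > 0 and p ≥ 1 satisfying p > (C₀/c₀) (k^(β+1)/(k-s)^(β+1)) β. Then u ≡ 0 on G. -/

import Mathlib

private lemma rpow_pm1_mul {x : ℝ} (hx : 0 ≤ x) {p : ℝ} (hp : 1 ≤ p) :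
    x ^ (p - 1) * x = x ^ p := by
  rcases eq_or_lt_of_le hx with h | h
  · rw [← h, Real.zero_rpow (by linarith : p ≠ 0), mul_zero]
  · calc x ^ (p - 1) * x = x ^ (p - 1) * x ^ (1 : ℝ) := by rw [Real.rpow_one]
      _ = x ^ (p - 1 + 1) := (Real.rpow_add h _ _).symm
      _ = x ^ p := by norm_num

private lemma young_key {p a b : ℝ} (hp : 1 ≤ p) (hb : 0 ≤ b) (hab : b ≤ a) :
    p * ((a - b) * b ^ (p - 1)) ≤ a ^ p - b ^ p := by
  have ha : 0 ≤ a := le_trans hb hab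
  have hp0 : 0 < p := lt_of_lt_of_le one_pos hp
  have h1 : a * b ^ (p - 1) ≤ (1/p) * a ^ p + (1 - 1/p) * b ^ p := by
    have hg := Real.geom_mean_le_arith_mean2_weighted
      (by positivity : (0:ℝ) ≤ 1/p) (by rw [sub_nonneg]; rw [div_le_one hp0]; linarith : (0:ℝ) ≤ 1 - 1/p)
      (Real.rpow_nonneg ha p) (Real.rpow_nonneg hb p) (by ring)
    have e1 : (a ^ p) ^ (1/p : ℝ) = a := by
      rw [← Real.rpow_mul ha, mul_one_div, div_self hp0.ne', Real.rpow_one]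
    have e2 : (b ^ p) ^ (1 - 1/p : ℝ) = b ^ (p - 1) := by
      rw [← Real.rpow_mul hb]
      congr 1
      field_simp
    rw [e1, e2] at hg
    linarith
  have hbb : b ^ (p - 1) * b = b ^ p := rpow_pm1_mul hb hp
  have h2 : p * (a * b ^ (p-1)) ≤ a ^ p + (p - 1) * b ^ p := by
    have := mul_le_mul_of_nonneg_left h1 hp0.le
    have e : p * ((1/p) * a ^ p + (1 - 1/p) * b ^ p) = a ^ p + (p-1) * b ^ p := by
      field_simp
    linarith
  nlinarith [hbb]

private lemma key2aux {p a b s t : ℝ} (hp : 1 ≤ p) (hb : 0 ≤ b) (hab : b ≤ a)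
    (hs : 0 ≤ s) : -(|s - t| * (a ^ p + b ^ p) / p) ≤ (a - b) * (a ^ (p-1) * s - b ^ (p-1) * t) := by
  have ha : 0 ≤ a := le_trans hb hab
  have hp0 : 0 < p := lt_of_lt_of_le one_pos hp
  have h1 : 0 ≤ (a - b) * (a ^ (p-1) - b ^ (p-1)) :=
    mul_nonneg (by linarith) (sub_nonneg.mpr (Real.rpow_le_rpow hb hab (by linarith)))
  have h2 := young_key hp hb hab
  have h3 : 0 ≤ (a - b) * b ^ (p-1) := mul_nonneg (by linarith) (Real.rpow_nonneg hb _)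
  have h4 : -|s - t| ≤ s - t := neg_abs_le _
  have h5 : -(|s - t| * ((a - b) * b ^ (p-1))) ≤ (s - t) * ((a - b) * b ^ (p-1)) := by
    have := mul_le_mul_of_nonneg_right h4 h3
    linarith [this]
  have h6 : |s - t| * (p * ((a - b) * b ^ (p-1))) ≤ |s - t| * (a ^ p - b ^ p) :=
    mul_le_mul_of_nonneg_left h2 (abs_nonneg _)
  have h7 : |s - t| * (a ^ p - b ^ p) ≤ |s - t| * (a ^ p + b ^ p) := by
    have : a ^ p - b ^ p ≤ a ^ p + b ^ p := by nlinarith [Real.rpow_nonneg hb p]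
    exact mul_le_mul_of_nonneg_left this (abs_nonneg _)
  have heq : (a - b) * (a ^ (p-1) * s - b ^ (p-1) * t)
      = s * ((a - b) * (a ^ (p-1) - b ^ (p-1))) + (s - t) * ((a - b) * b ^ (p-1)) := by ring
  have h8 : 0 ≤ s * ((a - b) * (a ^ (p-1) - b ^ (p-1))) := mul_nonneg hs h1
  rw [heq, neg_le, ← sub_nonneg]
  have h9 : -(|s-t| * (a^p + b^p)/p) ≤ (s - t) * ((a-b)*b^(p-1)) := by
    have h11 : (a - b) * b ^ (p-1) ≤ (a ^ p + b ^ p) / p := by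
      rw [le_div_iff₀ hp0]
      nlinarith [Real.rpow_nonneg hb p]
    have h10 : |s - t| * ((a - b) * b ^ (p-1)) ≤ |s - t| * ((a ^ p + b ^ p) / p) :=
      mul_le_mul_of_nonneg_left h11 (abs_nonneg _)
    have h12 : |s - t| * ((a ^ p + b ^ p) / p) = |s - t| * (a ^ p + b ^ p) / p := by ring
    linarith [h5]
  linarith

private lemma key2 {p a b s t : ℝ} (hp : 1 ≤ p) (ha : 0 ≤ a) (hb : 0 ≤ b)
    (hs : 0 ≤ s) (ht : 0 ≤ t) :
    -(|s - t| * (a ^ p + b ^ p) / p) ≤ (a - b) * (a ^ (p-1) * s - b ^ (p-1) * t) := by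
  rcases le_total b a with h | h
  · exact key2aux hp hb h hs
  · have := key2aux (p:=p) (a:=b) (b:=a) (s:=t) (t:=s) hp ha h ht
    have heq : (b - a) * (b ^ (p-1) * t - a ^ (p-1) * s)
        = (a - b) * (a ^ (p-1) * s - b ^ (p-1) * t) := by ring
    rw [heq] at this
    rw [abs_sub_comm t s, add_comm (b ^ p) (a ^ p)] at this
    linarith [this]

private lemma key3 {a b β : ℝ} (ha : 0 < a) (hab : a ≤ b) (hβ : 0 < β) :
    a ^ (-β) - b ^ (-β) ≤ β * a ^ (-β - 1) * (b - a) := by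
  have hb : 0 < b := lt_of_lt_of_le ha hab
  set x := b / a with hx
  have hx1 : 1 ≤ x := (one_le_div ha).mpr hab
  have hx0 : 0 < x := lt_of_lt_of_le one_pos hx1
  have claim : 1 - β * (x - 1) ≤ x ^ (-β) := by
    rcases le_total β 1 with hβ1 | hβ1
    · have h := rpow_one_add_le_one_add_mul_self
        (show (-1:ℝ) ≤ x - 1 by linarith) hβ.le hβ1
      have hxe : (1 + (x-1)) = x := by ring
      rw [hxe] at h
      -- h : x ^ β ≤ 1 + β * (x - 1)
      have hxβ : 0 < x ^ β := Real.rpow_pos_of_pos hx0 β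
      rw [Real.rpow_neg hx0.le]
      rcases le_or_gt (1 - β * (x-1)) 0 with h0 | h0
      · exact le_trans h0 (by positivity)
      · rw [← one_div, le_div_iff₀ hxβ]
        have hh : (1 - β*(x-1)) * (1 + β*(x-1)) ≤ 1 := by nlinarith [sq_nonneg (β*(x-1))]
        calc (1 - β * (x - 1)) * x ^ β ≤ (1 - β*(x-1)) * (1 + β*(x-1)) :=
              mul_le_mul_of_nonneg_left h h0.le
          _ ≤ 1 := hh
    · have hs' : (-1:ℝ) ≤ x⁻¹ - 1 := by
        have : 0 < x⁻¹ := by positivity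
        linarith
      have h := one_add_mul_self_le_rpow_one_add hs' hβ1
      have hxe : (1 + (x⁻¹ - 1)) = x⁻¹ := by ring
      rw [hxe] at h
      -- h : 1 + β * (x⁻¹ - 1) ≤ (x⁻¹) ^ β
      rw [Real.inv_rpow hx0.le, ← Real.rpow_neg hx0.le] at h
      have h2 : 1 - β * (x - 1) ≤ 1 + β * (x⁻¹ - 1) := by
        have e : x⁻¹ - 1 = -((x-1)/x) := by field_simp; ring
        rw [e]
        have : (x-1)/x ≤ x - 1 := by
          rw [div_le_iff₀ hx0]; nlinarith
        nlinarith
      linarith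
  have h1 : (0:ℝ) ≤ a ^ (-β) := Real.rpow_nonneg ha.le _
  have h4 : a ^ (-β) * x ^ (-β) = b ^ (-β) := by
    rw [← Real.mul_rpow ha.le hx0.le]
    congr 1
    rw [hx]
    field_simp
  have h3 : a ^ (-β) * (1 - x ^ (-β)) ≤ a ^ (-β) * (β * (x - 1)) :=
    mul_le_mul_of_nonneg_left (by linarith) h1
  have h5 : a ^ (-β) * (β * (x - 1)) = β * a ^ (-β - 1) * (b - a) := by
    have e : a ^ (-β - 1) = a ^ (-β) * a⁻¹ := by
      rw [show -β - 1 = -β + (-1) by ring, Real.rpow_add ha, Real.rpow_neg_one]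
    rw [e, hx]
    field_simp
  have expand : a ^ (-β) * (1 - x ^ (-β)) = a ^ (-β) - b ^ (-β) := by
    rw [mul_sub, mul_one, h4]
  linarith

private lemma key4 {α β s k' t : ℝ} (hα0 : 0 ≤ α) (hα : α ≤ 1) (hβ : 0 < β)
    (hs : 0 ≤ s) (hk's : s < k') (ht : k' ≤ t) :
    t ^ (α+β) * (k'-s) ^ (β+1) ≤ k' ^ (α+β) * (t-s) ^ (β+1) := by
  have hk'0 : 0 < k' := lt_of_le_of_lt hs hk's
  have ht0 : 0 < t := lt_of_lt_of_le hk'0 ht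
  have hts : 0 < t - s := by linarith
  have hk's0 : 0 < k' - s := by linarith
  have h1 : (t/k') ^ (α+β) ≤ (t/k') ^ (β+1) :=
    Real.rpow_le_rpow_of_exponent_le ((one_le_div hk'0).mpr ht) (by linarith)
  have h2 : t/k' ≤ (t-s)/(k'-s) := by
    rw [div_le_div_iff₀ hk'0 hk's0]
    nlinarith
  have h3 : (t/k') ^ (β+1) ≤ ((t-s)/(k'-s)) ^ (β+1) :=
    Real.rpow_le_rpow (by positivity) h2 (by linarith)
  have h4 := le_trans h1 h3
  rw [Real.div_rpow ht0.le hk'0.le, Real.div_rpow hts.le hk's0.le,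
    div_le_div_iff₀ (Real.rpow_pos_of_pos hk'0 _) (Real.rpow_pos_of_pos hk's0 _)] at h4
  linarith

private lemma rpow_neg_antitone {A B e : ℝ} (hA : 0 < A) (hAB : A ≤ B) (he : 0 ≤ e) :
    B ^ (-e) ≤ A ^ (-e) := by
  rw [Real.rpow_neg (by linarith : (0:ℝ) ≤ B), Real.rpow_neg hA.le]
  exact inv_anti₀ (Real.rpow_pos_of_pos hA _) (Real.rpow_le_rpow hA.le hAB he)

/-- The weighted graph Laplacian. -/
noncomputable def graphLap {G : Type*} (μ : G → ℝ) (ω : G → G → ℝ) (f : G → ℝ) (x : G) : ℝ :=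
  (μ x)⁻¹ * ∑' y, ω x y * (f y - f x)

set_option maxHeartbeats 2000000 in
/-- Theorem 3.4: uniqueness in weighted `ℓ^p`, `p ≥ 1`, for the Schrödinger equation
`Δu = Vu`, with `d` additionally 1-intrinsic with bound `C₀`. -/
theorem uniqueness_p_ge_one {G : Type*} [Infinite G] (μ : G → ℝ) (ω d : G → G → ℝ)
    (hμ : ∀ x, 0 < μ x) (hω_nonneg : ∀ x y, 0 ≤ ω x y)
    (hω_symm : ∀ x y, ω x y = ω y x) (hω_diag : ∀ x, ω x x = 0)
    (hω_sum : ∀ x, Summable (fun y => ω x y))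
    (hconn : ∀ x y : G, Relation.ReflTransGen (fun a b => 0 < ω a b) x y)
    (hloc : ∀ x, {y | ω x y ≠ 0}.Finite)
    (hd_nonneg : ∀ x y, 0 ≤ d x y) (hd_self : ∀ x, d x x = 0)
    (hd_symm : ∀ x y, d x y = d y x)
    (hd_tri : ∀ x y z, d x y ≤ d x z + d z y)
    (hintrinsic : ∀ x, ∑' y, ω x y * d x y ^ 2 ≤ μ x)
    (C₀ : ℝ) (hC₀ : 0 < C₀) (h1intr : ∀ x, ∑' y, ω x y * d x y ≤ C₀ * μ x)
    (s : ℝ) (hjump : ∀ x y, 0 < ω x y → d x y ≤ s)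
    (hballs : ∀ (x : G) (r : ℝ), {y | d x y < r}.Finite)
    (x₀ : G) (V : G → ℝ) (c₀ k α : ℝ) (hc₀ : 0 < c₀) (hk : s < k)
    (hα0 : 0 < α) (hα : α ≤ 1)
    (hV : ∀ x, V x ≥ c₀ * (d x x₀ + k) ^ (-α))
    (u : G → ℝ) (hu : ∀ x, graphLap μ ω u x = V x * u x)
    (β p : ℝ) (hβ : 0 < β) (hp1 : 1 ≤ p)
    (hp : p > C₀ / c₀ * (k ^ (β + 1) / (k - s) ^ (β + 1)) * β)
    (husum : Summable (fun x => |u x| ^ p * (d x x₀ + k) ^ (-β) * μ x)) :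
    ∀ x, u x = 0 := by
  classical
  have hp0 : 0 < p := lt_of_lt_of_le one_pos hp1
  -- jump size is nonnegative
  have hs0 : 0 ≤ s := by
    obtain ⟨y, hy⟩ := exists_ne x₀
    rcases (hconn x₀ y).cases_head with h | ⟨c, hc, _⟩
    · exact absurd h.symm hy
    · exact le_trans (hd_nonneg x₀ c) (hjump _ _ hc)
  have hk0 : 0 < k := lt_of_le_of_lt hs0 hk
  -- constants
  have hks : 0 < k - s := by linarith
  have hK1 : 1 ≤ k ^ (β+1) / (k-s) ^ (β+1) := by
    rw [le_div_iff₀ (Real.rpow_pos_of_pos hks _)]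
    rw [one_mul]
    exact Real.rpow_le_rpow hks.le (by linarith) (by linarith)
  have hP : k ^ (β+1) / (k-s) ^ (β+1) < p * c₀ / (β * C₀) := by
    rw [lt_div_iff₀ (by positivity)]
    have h2 : C₀/c₀ * (k^(β+1)/(k-s)^(β+1)) * β * c₀ < p * c₀ :=
      mul_lt_mul_of_pos_right hp hc₀
    have h3 : C₀/c₀ * (k^(β+1)/(k-s)^(β+1)) * β * c₀
        = k^(β+1)/(k-s)^(β+1) * (β*C₀) := by field_simp
    linarith
  set P := p * c₀ / (β * C₀) with hPdef
  have hP1 : 1 < P := lt_of_le_of_lt hK1 hP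
  have hP0 : 0 < P := lt_trans one_pos hP1
  set c := P ^ ((β+1)⁻¹) with hcdef
  have hc1 : 1 < c := by
    rw [hcdef]
    rw [Real.one_lt_rpow_iff_of_pos hP0]
    left
    exact ⟨hP1, by positivity⟩
  set k' := max (max k 1) (c * s / (c - 1)) + 1 with hk'def
  have hk'k : k ≤ k' := by
    have h1 := le_max_left k 1
    have h2 := le_max_left (max k 1) (c * s / (c - 1))
    rw [hk'def]; linarith
  have hk'1 : 1 ≤ k' := by
    have h1 := le_max_right k 1
    have h2 := le_max_left (max k 1) (c * s / (c - 1))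
    rw [hk'def]; linarith
  have hk'cs : c * s / (c-1) < k' := by
    have h2 := le_max_right (max k 1) (c * s / (c - 1))
    rw [hk'def]; linarith
  have hscs : s ≤ c * s / (c-1) := by
    rw [le_div_iff₀ (by linarith)]
    nlinarith
  have hk's : s < k' := lt_of_le_of_lt hscs hk'cs
  have hk'0 : 0 < k' := by linarith
  have hk'spos : 0 < k' - s := by linarith
  have hratio : k' / (k' - s) < c := by
    rw [div_lt_iff₀ hk'spos]
    rw [div_lt_iff₀ (by linarith : (0:ℝ) < c - 1)] at hk'cs
    nlinarith
  have hKk' : k' ^ (α+β) / (k'-s) ^ (β+1) < P := by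
    have h1 : k'^(α+β) ≤ k'^(β+1) :=
      Real.rpow_le_rpow_of_exponent_le hk'1 (by linarith)
    have h2 : (k'/(k'-s))^(β+1) = k'^(β+1)/(k'-s)^(β+1) :=
      Real.div_rpow hk'0.le hk'spos.le _
    have h3 : (k'/(k'-s))^(β+1) < c^(β+1) :=
      Real.rpow_lt_rpow (by positivity) hratio (by linarith)
    have h4 : c^(β+1) = P := by
      rw [hcdef, ← Real.rpow_mul hP0.le, inv_mul_cancel₀ (by linarith : β+1 ≠ 0), Real.rpow_one]
    calc k'^(α+β)/(k'-s)^(β+1)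
        ≤ k'^(β+1)/(k'-s)^(β+1) :=
          (div_le_div_iff_of_pos_right (Real.rpow_pos_of_pos hk'spos _)).mpr h1
      _ < P := by rw [← h2]; linarith
  set θ := β * C₀ / (p * c₀) * (k' ^ (α+β) / (k'-s) ^ (β+1)) with hθdef
  have hθ0 : 0 ≤ θ := by
    rw [hθdef]; positivity
  have hθ1 : θ < 1 := by
    rw [hθdef]
    have h1 : β * C₀ / (p * c₀) * (k' ^ (α+β) / (k'-s) ^ (β+1))
        < β * C₀ / (p * c₀) * P := by
      exact mul_lt_mul_of_pos_left hKk' (by positivity)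
    have h2 : β * C₀ / (p * c₀) * P = 1 := by
      rw [hPdef]; field_simp
    linarith

  -- notation
  set v : G → ℝ := fun x => |u x| with hvdef
  set g' : G → ℝ := fun x => (d x x₀ + k') ^ (-β) with hg'def
  set w : G → ℝ := fun x => (d x x₀ + k) ^ (-α) * g' x with hwdef
  have hvnonneg : ∀ x, 0 ≤ v x := fun x => abs_nonneg _
  have hdd0 : ∀ x : G, 0 ≤ d x x₀ := fun x => hd_nonneg x x₀
  have hdk : ∀ x : G, 0 < d x x₀ + k := fun x => by linarith [hdd0 x]
  have hdk' : ∀ x : G, 0 < d x x₀ + k' := fun x => by linarith [hdd0 x]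
  have hdk's : ∀ x : G, 0 < d x x₀ + k' - s := fun x => by linarith [hdd0 x]
  have hg'pos : ∀ x, 0 < g' x := fun x => Real.rpow_pos_of_pos (hdk' x) _
  have hwpos : ∀ x, 0 < w x :=
    fun x => mul_pos (Real.rpow_pos_of_pos (hdk x) _) (hg'pos x)
  have hg'le : ∀ x, g' x ≤ (d x x₀ + k) ^ (-β) :=
    fun x => rpow_neg_antitone (hdk x) (by linarith [hk'k]) hβ.le
  have hterm_nonneg : ∀ x, 0 ≤ v x ^ p * g' x * μ x := fun x =>
    mul_nonneg (mul_nonneg (Real.rpow_nonneg (hvnonneg x) _) (hg'pos x).le) (hμ x).le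
  have hterm_nonneg' : ∀ x, 0 ≤ v x ^ p * w x * μ x := fun x =>
    mul_nonneg (mul_nonneg (Real.rpow_nonneg (hvnonneg x) _) (hwpos x).le) (hμ x).le
  have hS'sum : Summable (fun x => v x ^ p * g' x * μ x) := by
    refine Summable.of_nonneg_of_le (fun x => hterm_nonneg x) (fun x => ?_) husum
    exact mul_le_mul_of_nonneg_right
      (mul_le_mul_of_nonneg_left (hg'le x) (Real.rpow_nonneg (hvnonneg x) _)) (hμ x).le
  have hTsum : Summable (fun x => v x ^ p * w x * μ x) := by
    refine Summable.of_nonneg_of_le (fun x => hterm_nonneg' x) (fun x => ?_)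
      (husum.mul_left (k ^ (-α)))
    have hw_le : w x ≤ k ^ (-α) * (d x x₀ + k) ^ (-β) := by
      rw [hwdef]
      exact mul_le_mul (rpow_neg_antitone hk0 (by linarith [hdd0 x]) hα0.le)
        (hg'le x) (hg'pos x).le (by positivity)
    calc v x ^ p * w x * μ x ≤ v x ^ p * (k ^ (-α) * (d x x₀ + k) ^ (-β)) * μ x :=
          mul_le_mul_of_nonneg_right
            (mul_le_mul_of_nonneg_left hw_le (Real.rpow_nonneg (hvnonneg x) _)) (hμ x).le
      _ = k ^ (-α) * (|u x| ^ p * (d x x₀ + k) ^ (-β) * μ x) := by rw [hvdef]; ring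
  set S' := ∑' x, v x ^ p * g' x * μ x with hS'def
  set Ttot := ∑' x, v x ^ p * w x * μ x with hTtotdef
  have hS'0 : 0 ≤ S' := tsum_nonneg (fun x => hterm_nonneg x)
  have hTtot0 : 0 ≤ Ttot := tsum_nonneg (fun x => hterm_nonneg' x)
  -- summability over neighbours
  have hnbsum : ∀ x (f : G → ℝ), (∀ y, ω x y = 0 → f y = 0) → Summable f := by
    intro x f hf
    refine summable_of_ne_finset_zero (s := (hloc x).toFinset) (fun y hy => ?_)
    refine hf y ?_
    by_contra hne
    exact hy ((hloc x).mem_toFinset.mpr hne)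
  -- Kato's inequality from the equation
  have hKato : ∀ x : G, μ x * (V x * v x) ≤ ∑' y, ω x y * (v y - v x) := by
    intro x
    have h := hu x
    simp only [graphLap] at h
    have heq : ∑' y, ω x y * (u y - u x) = μ x * (V x * u x) := by
      calc ∑' y, ω x y * (u y - u x)
          = μ x * ((μ x)⁻¹ * ∑' y, ω x y * (u y - u x)) := by
            rw [← mul_assoc, mul_inv_cancel₀ (hμ x).ne', one_mul]
        _ = μ x * (V x * u x) := by rw [h]
    have h1 : Summable (fun y => ω x y * (u y - u x)) :=
      hnbsum x _ (fun y hy => by rw [hy, zero_mul])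
    have h2 : Summable (fun y => ω x y * (v y - v x)) :=
      hnbsum x _ (fun y hy => by rw [hy, zero_mul])
    set σ : ℝ := if 0 ≤ u x then 1 else -1 with hσdef
    have hσu : σ * u x = v x := by
      by_cases hx : 0 ≤ u x
      · simp [hσdef, hx, hvdef, abs_of_nonneg hx]
      · simp only [hσdef, hx, if_false, hvdef]
        rw [abs_of_neg (lt_of_not_ge hx)]
        ring
    have hσy : ∀ y, σ * u y ≤ v y := by
      intro y
      by_cases hx : 0 ≤ u x
      · simp only [hσdef, hx, if_true, one_mul, hvdef]
        exact le_abs_self _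
      · simp only [hσdef, hx, if_false, hvdef]
        rw [neg_mul, one_mul]
        exact neg_le_abs _
    calc μ x * (V x * v x) = σ * ∑' y, ω x y * (u y - u x) := by
          rw [heq, ← hσu]; ring
      _ = ∑' y, σ * (ω x y * (u y - u x)) := tsum_mul_left.symm
      _ ≤ ∑' y, ω x y * (v y - v x) := by
          refine Summable.tsum_le_tsum (fun y => ?_) (h1.mul_left σ) h2
          have e : σ * (ω x y * (u y - u x)) = ω x y * (σ * u y - v x) := by
            rw [← hσu]; ring
          rw [e]
          exact mul_le_mul_of_nonneg_left (by linarith [hσy y]) (hω_nonneg x y)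

  -- Main Caccioppoli-type estimate with cutoff of radius R
  have main : ∀ R : ℝ, 0 < R → ∀ F : Finset G, (∀ x ∈ F, d x x₀ < R) →
      c₀ * ∑ x ∈ F, v x ^ p * w x * (1 - d x x₀ / R) * μ x
        ≤ θ * c₀ * Ttot + C₀ * S' / (p * R) := by
    intro R hR F hF
    set η : G → ℝ := fun x => max 0 (1 - d x x₀ / R) with hηdef
    have hη0 : ∀ x, 0 ≤ η x := fun x => le_max_left _ _
    have hη1 : ∀ x, η x ≤ 1 := by
      intro x
      rw [hηdef]
      simp only
      rw [max_le_iff]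
      have := div_nonneg (hdd0 x) hR.le
      constructor <;> linarith
    have hηout : ∀ x, R ≤ d x x₀ → η x = 0 := by
      intro x hx
      rw [hηdef]
      simp only
      rw [max_eq_left]
      have : 1 ≤ d x x₀ / R := (one_le_div hR).mpr hx
      linarith
    have hηlow : ∀ x, 1 - d x x₀ / R ≤ η x := fun x => le_max_right _ _
    set Bs : Finset G := (hballs x₀ R).toFinset with hBsdef
    have hBsmem : ∀ y, y ∈ Bs ↔ d y x₀ < R := by
      intro y
      rw [hBsdef, Set.Finite.mem_toFinset, Set.mem_setOf_eq, hd_symm]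
    set nb : G → Finset G := fun x => (hloc x).toFinset with hnbdef
    have hnbmem : ∀ x y, y ∉ nb x → ω x y = 0 := by
      intro x y hy
      by_contra hne
      exact hy ((hloc x).mem_toFinset.mpr hne)
    set T : Finset G := Bs ∪ Bs.biUnion nb with hTdef
    have hBsT : Bs ⊆ T := Finset.subset_union_left
    have hnbT : ∀ x ∈ Bs, nb x ⊆ T := fun x hx =>
      subset_trans (Finset.subset_biUnion_of_mem nb hx) Finset.subset_union_right
    set gR : G → ℝ := fun x => g' x * η x with hgRdef
    have hgR0 : ∀ x, 0 ≤ gR x := fun x => mul_nonneg (hg'pos x).le (hη0 x)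
    set φ : G → ℝ := fun x => v x ^ (p-1) * gR x with hφdef
    have hφ0 : ∀ x, 0 ≤ φ x := fun x =>
      mul_nonneg (Real.rpow_nonneg (hvnonneg x) _) (hgR0 x)
    have hφBs : ∀ x, x ∉ Bs → φ x = 0 := by
      intro x hx
      have hdx : R ≤ d x x₀ := le_of_not_gt (fun hc => hx ((hBsmem x).mpr hc))
      rw [hφdef]
      simp only [hgRdef]
      rw [hηout x hdx, mul_zero, mul_zero]
    have hvv : ∀ x, v x ^ (p-1) * v x = v x ^ p := fun x => rpow_pm1_mul (hvnonneg x) hp1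
    have hV0 : ∀ x, 0 ≤ V x := fun x =>
      le_trans (mul_nonneg hc₀.le (Real.rpow_nonneg (hdk x).le _)) (hV x)
    -- Step A/B
    have stepAB : c₀ * ∑ x ∈ F, v x ^ p * w x * (1 - d x x₀ / R) * μ x
        ≤ ∑ x ∈ T, φ x * (μ x * (V x * v x)) := by
      have hFT : F ⊆ T := fun x hx => hBsT ((hBsmem x).mpr (hF x hx))
      rw [Finset.mul_sum]
      calc ∑ x ∈ F, c₀ * (v x ^ p * w x * (1 - d x x₀ / R) * μ x)
          ≤ ∑ x ∈ F, φ x * (μ x * (V x * v x)) := by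
            refine Finset.sum_le_sum (fun x _ => ?_)
            have hfac : 0 ≤ c₀ * (v x ^ p * w x * μ x) :=
              mul_nonneg hc₀.le (hterm_nonneg' x)
            calc c₀ * (v x ^ p * w x * (1 - d x x₀ / R) * μ x)
                = c₀ * (v x ^ p * w x * μ x) * (1 - d x x₀ / R) := by ring
              _ ≤ c₀ * (v x ^ p * w x * μ x) * η x :=
                  mul_le_mul_of_nonneg_left (hηlow x) hfac
              _ = v x ^ p * gR x * μ x * (c₀ * (d x x₀ + k) ^ (-α)) := by
                  rw [hwdef, hgRdef]; ring
              _ ≤ v x ^ p * gR x * μ x * V x := by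
                  refine mul_le_mul_of_nonneg_left (hV x) ?_
                  exact mul_nonneg (mul_nonneg (Real.rpow_nonneg (hvnonneg x) _) (hgR0 x)) (hμ x).le
              _ = φ x * (μ x * (V x * v x)) := by
                  rw [hφdef, ← hvv x]; ring
        _ ≤ ∑ x ∈ T, φ x * (μ x * (V x * v x)) := by
            refine Finset.sum_le_sum_of_subset_of_nonneg hFT (fun x _ _ => ?_)
            exact mul_nonneg (hφ0 x) (mul_nonneg (hμ x).le (mul_nonneg (hV0 x) (hvnonneg x)))
    -- Step C
    have stepC : ∑ x ∈ T, φ x * (μ x * (V x * v x))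
        ≤ ∑ x ∈ T, φ x * (∑ y ∈ T, ω x y * (v y - v x)) := by
      refine Finset.sum_le_sum (fun x _ => ?_)
      by_cases hx : x ∈ Bs
      · have hins : ∑' y, ω x y * (v y - v x) = ∑ y ∈ T, ω x y * (v y - v x) := by
          refine tsum_eq_sum (fun y hy => ?_)
          rw [hnbmem x y (fun hmem => hy (hnbT x hx hmem)), zero_mul]
        exact mul_le_mul_of_nonneg_left (le_of_le_of_eq (hKato x) hins) (hφ0 x)
      · rw [hφBs x hx]
        simp
    -- Step D: Green identity
    have hGreen : ∑ x ∈ T, φ x * (∑ y ∈ T, ω x y * (v y - v x))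
        = (1/2) * ∑ x ∈ T, ∑ y ∈ T, ω x y * ((v y - v x) * (φ x - φ y)) := by
      have e1 : ∑ x ∈ T, φ x * (∑ y ∈ T, ω x y * (v y - v x))
          = ∑ x ∈ T, ∑ y ∈ T, ω x y * (v y - v x) * φ x := by
        refine Finset.sum_congr rfl (fun x _ => ?_)
        rw [Finset.mul_sum]
        exact Finset.sum_congr rfl (fun y _ => by ring)
      have hswap : ∑ x ∈ T, ∑ y ∈ T, ω x y * (v y - v x) * φ y
          = -∑ x ∈ T, ∑ y ∈ T, ω x y * (v y - v x) * φ x := by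
        rw [Finset.sum_comm]
        rw [← Finset.sum_neg_distrib]
        refine Finset.sum_congr rfl (fun a _ => ?_)
        rw [← Finset.sum_neg_distrib]
        refine Finset.sum_congr rfl (fun b _ => ?_)
        rw [hω_symm b a]
        ring
      have hexpand : ∑ x ∈ T, ∑ y ∈ T, ω x y * ((v y - v x) * (φ x - φ y))
          = (∑ x ∈ T, ∑ y ∈ T, ω x y * (v y - v x) * φ x)
            - ∑ x ∈ T, ∑ y ∈ T, ω x y * (v y - v x) * φ y := by
        rw [← Finset.sum_sub_distrib]
        refine Finset.sum_congr rfl (fun x _ => ?_)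
        rw [← Finset.sum_sub_distrib]
        refine Finset.sum_congr rfl (fun y _ => by ring)
      rw [e1]
      rw [hexpand, hswap]
      ring
    -- Step D2: pointwise inequality  + symmetrization
    have stepD2 : (1/2) * ∑ x ∈ T, ∑ y ∈ T, ω x y * ((v y - v x) * (φ x - φ y))
        ≤ (1/p) * ∑ x ∈ T, ∑ y ∈ T, ω x y * (|gR y - gR x| * v x ^ p) := by
      have habs_symm : ∑ x ∈ T, ∑ y ∈ T, ω x y * (|gR y - gR x| * v y ^ p)
          = ∑ x ∈ T, ∑ y ∈ T, ω x y * (|gR y - gR x| * v x ^ p) := by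
        rw [Finset.sum_comm]
        refine Finset.sum_congr rfl (fun a _ => ?_)
        refine Finset.sum_congr rfl (fun b _ => ?_)
        rw [hω_symm b a, abs_sub_comm (gR a) (gR b)]
      have hptwise : ∀ x y, ω x y * ((v y - v x) * (φ x - φ y))
          ≤ ω x y * ((|gR y - gR x| * (v y ^ p + v x ^ p)) / p) := by
        intro x y
        refine mul_le_mul_of_nonneg_left ?_ (hω_nonneg x y)
        have hk2 := key2 (p := p) (a := v y) (b := v x) (s := gR y) (t := gR x)
          hp1 (hvnonneg y) (hvnonneg x) (hgR0 y) (hgR0 x)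
        have e : (v y - v x) * (v y ^ (p-1) * gR y - v x ^ (p-1) * gR x)
            = -((v y - v x) * (φ x - φ y)) := by
          rw [hφdef]; ring
        rw [e] at hk2
        have e2 : |gR y - gR x| * (v y ^ p + v x ^ p) / p
            = |gR y - gR x| * (v y ^ p + v x ^ p) / p := rfl
        linarith
      calc (1/2) * ∑ x ∈ T, ∑ y ∈ T, ω x y * ((v y - v x) * (φ x - φ y))
          ≤ (1/2) * ∑ x ∈ T, ∑ y ∈ T, ω x y * ((|gR y - gR x| * (v y ^ p + v x ^ p)) / p) := by
            refine mul_le_mul_of_nonneg_left ?_ (by norm_num)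
            refine Finset.sum_le_sum (fun x _ => ?_)
            exact Finset.sum_le_sum (fun y _ => hptwise x y)
        _ = (1/(2*p)) * ((∑ x ∈ T, ∑ y ∈ T, ω x y * (|gR y - gR x| * v y ^ p))
              + ∑ x ∈ T, ∑ y ∈ T, ω x y * (|gR y - gR x| * v x ^ p)) := by
            rw [← Finset.sum_add_distrib]
            rw [Finset.mul_sum, Finset.mul_sum]
            refine Finset.sum_congr rfl (fun x _ => ?_)
            rw [← Finset.sum_add_distrib, Finset.mul_sum, Finset.mul_sum]
            refine Finset.sum_congr rfl (fun y _ => ?_)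
            field_simp
        _ = (1/p) * ∑ x ∈ T, ∑ y ∈ T, ω x y * (|gR y - gR x| * v x ^ p) := by
            rw [habs_symm]
            ring
    -- Step E: gradient bound
    have stepE : ∑ x ∈ T, ∑ y ∈ T, ω x y * (|gR y - gR x| * v x ^ p)
        ≤ ∑ x ∈ T, v x ^ p * ((β * (d x x₀ + k' - s) ^ (-(β+1)) + g' x / R) * (C₀ * μ x)) := by
      refine Finset.sum_le_sum (fun x _ => ?_)
      set coef : ℝ := β * (d x x₀ + k' - s) ^ (-(β+1)) + g' x / R with hcoefdef
      have hcoef0 : 0 ≤ coef := by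
        have h1 : (0:ℝ) ≤ β * (d x x₀ + k' - s) ^ (-(β+1)) :=
          mul_nonneg hβ.le (Real.rpow_nonneg (hdk's x).le _)
        have h2 : (0:ℝ) ≤ g' x / R := div_nonneg (hg'pos x).le hR.le
        rw [hcoefdef]; linarith
      have hedge : ∀ y, ω x y * |gR y - gR x| ≤ coef * (ω x y * d x y) := by
        intro y
        rcases (hω_nonneg x y).eq_or_lt with hω | hω
        · rw [← hω]; simp
        · have hds : d x y ≤ s := hjump x y hω
          have hd0 : 0 ≤ d x y := hd_nonneg x y
          have htri1 : d x x₀ - d y x₀ ≤ d x y := by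
            have := hd_tri x x₀ y
            linarith
          have htri2 : d y x₀ - d x x₀ ≤ d x y := by
            have h := hd_tri y x₀ x
            rw [hd_symm y x] at h
            linarith
          -- bound on |g' y - g' x|
          have hgbound : |g' y - g' x| ≤ β * (d x x₀ + k' - s) ^ (-(β+1)) * d x y := by
            rcases le_total (d x x₀) (d y x₀) with hc | hc
            · have key := key3 (a := d x x₀ + k') (b := d y x₀ + k') (hdk' x)
                (by linarith) hβ
              have habs : |g' y - g' x| = (d x x₀ + k') ^ (-β) - (d y x₀ + k') ^ (-β) := by
                rw [hg'def]
                simp only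
                rw [abs_sub_comm, abs_of_nonneg
                  (sub_nonneg.mpr (rpow_neg_antitone (hdk' x) (by linarith) hβ.le))]
              rw [habs]
              have hWle : (d x x₀ + k') ^ (-β - 1) ≤ (d x x₀ + k' - s) ^ (-(β+1)) := by
                rw [show (-β - 1 : ℝ) = -(β+1) by ring]
                exact rpow_neg_antitone (hdk's x) (by linarith) (by linarith)
              calc (d x x₀ + k') ^ (-β) - (d y x₀ + k') ^ (-β)
                  ≤ β * (d x x₀ + k') ^ (-β - 1) * (d y x₀ + k' - (d x x₀ + k')) := key
                _ ≤ β * (d x x₀ + k' - s) ^ (-(β+1)) * d x y := by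
                    have h1 : d y x₀ + k' - (d x x₀ + k') ≤ d x y := by linarith
                    have h2 : 0 ≤ d y x₀ + k' - (d x x₀ + k') := by linarith
                    refine mul_le_mul (mul_le_mul_of_nonneg_left hWle hβ.le) h1 h2 ?_
                    exact mul_nonneg hβ.le (Real.rpow_nonneg (hdk's x).le _)
            · have key := key3 (a := d y x₀ + k') (b := d x x₀ + k') (hdk' y)
                (by linarith) hβ
              have habs : |g' y - g' x| = (d y x₀ + k') ^ (-β) - (d x x₀ + k') ^ (-β) := by
                rw [hg'def]
                simp only
                rw [abs_of_nonneg
                  (sub_nonneg.mpr (rpow_neg_antitone (hdk' y) (by linarith) hβ.le))]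
              rw [habs]
              have hWle : (d y x₀ + k') ^ (-β - 1) ≤ (d x x₀ + k' - s) ^ (-(β+1)) := by
                rw [show (-β - 1 : ℝ) = -(β+1) by ring]
                refine rpow_neg_antitone (hdk's x) ?_ (by linarith)
                linarith
              calc (d y x₀ + k') ^ (-β) - (d x x₀ + k') ^ (-β)
                  ≤ β * (d y x₀ + k') ^ (-β - 1) * (d x x₀ + k' - (d y x₀ + k')) := key
                _ ≤ β * (d x x₀ + k' - s) ^ (-(β+1)) * d x y := by
                    have h1 : d x x₀ + k' - (d y x₀ + k') ≤ d x y := by linarith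
                    have h2 : 0 ≤ d x x₀ + k' - (d y x₀ + k') := by linarith
                    refine mul_le_mul (mul_le_mul_of_nonneg_left hWle hβ.le) h1 h2 ?_
                    exact mul_nonneg hβ.le (Real.rpow_nonneg (hdk's x).le _)
          -- bound on |η y - η x|
          have hηbound : |η y - η x| ≤ d x y / R := by
            rw [hηdef]
            simp only
            rw [max_comm 0 (1 - d y x₀ / R), max_comm 0 (1 - d x x₀ / R)]
            refine le_trans (abs_max_sub_max_le_abs _ _ _) ?_
            rw [show (1 - d y x₀ / R) - (1 - d x x₀ / R) = (d x x₀ - d y x₀)/R by ring]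
            rw [abs_div, abs_of_pos hR]
            exact (div_le_div_iff_of_pos_right hR).mpr (abs_le.mpr ⟨by linarith, by linarith⟩)
          have hgRexp : gR y - gR x = (g' y - g' x) * η y + g' x * (η y - η x) := by
            rw [hgRdef]; ring
          have h3 : |gR y - gR x| ≤ |g' y - g' x| * η y + g' x * |η y - η x| := by
            rw [hgRexp]
            refine le_trans (abs_add_le _ _) ?_
            rw [abs_mul, abs_mul, abs_of_nonneg (hη0 y), abs_of_nonneg (hg'pos x).le]
          have h4 : |g' y - g' x| * η y ≤ |g' y - g' x| := by
            have := mul_le_mul_of_nonneg_left (hη1 y) (abs_nonneg (g' y - g' x))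
            simpa using this
          have h5 : g' x * |η y - η x| ≤ g' x * (d x y / R) :=
            mul_le_mul_of_nonneg_left hηbound (hg'pos x).le
          calc ω x y * |gR y - gR x|
              ≤ ω x y * (β * (d x x₀ + k' - s) ^ (-(β+1)) * d x y + g' x * (d x y / R)) :=
                mul_le_mul_of_nonneg_left (by linarith [hgbound]) (hω_nonneg x y)
            _ = coef * (ω x y * d x y) := by rw [hcoefdef]; ring
      have hsum_d : ∑ y ∈ T, ω x y * d x y ≤ C₀ * μ x := by
        refine le_trans (Summable.sum_le_tsum T
          (fun y _ => mul_nonneg (hω_nonneg x y) (hd_nonneg x y)) ?_) (h1intr x)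
        exact hnbsum x _ (fun y hy => by rw [hy, zero_mul])
      calc ∑ y ∈ T, ω x y * (|gR y - gR x| * v x ^ p)
          = v x ^ p * ∑ y ∈ T, ω x y * |gR y - gR x| := by
            rw [Finset.mul_sum]
            exact Finset.sum_congr rfl (fun y _ => by ring)
        _ ≤ v x ^ p * (coef * (C₀ * μ x)) := by
            refine mul_le_mul_of_nonneg_left ?_ (Real.rpow_nonneg (hvnonneg x) _)
            calc ∑ y ∈ T, ω x y * |gR y - gR x|
                ≤ ∑ y ∈ T, coef * (ω x y * d x y) := Finset.sum_le_sum (fun y _ => hedge y)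
              _ = coef * ∑ y ∈ T, ω x y * d x y := by rw [Finset.mul_sum]
              _ ≤ coef * (C₀ * μ x) := mul_le_mul_of_nonneg_left hsum_d hcoef0
    -- Step F: weight comparison
    have stepF : (1/p) * ∑ x ∈ T, v x ^ p * ((β * (d x x₀ + k' - s) ^ (-(β+1)) + g' x / R) * (C₀ * μ x))
        ≤ θ * c₀ * ∑ x ∈ T, v x ^ p * w x * μ x
          + C₀/(p*R) * ∑ x ∈ T, v x ^ p * g' x * μ x := by
      rw [Finset.mul_sum, Finset.mul_sum, Finset.mul_sum, ← Finset.sum_add_distrib]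
      refine Finset.sum_le_sum (fun x _ => ?_)
      have hWw : (d x x₀ + k' - s) ^ (-(β+1)) ≤ (k'^(α+β)/(k'-s)^(β+1)) * w x := by
        have hB : 0 < (d x x₀ + k) ^ α := Real.rpow_pos_of_pos (hdk x) _
        have hC : 0 < (d x x₀ + k') ^ β := Real.rpow_pos_of_pos (hdk' x) _
        have hX : 0 < (d x x₀ + k' - s) ^ (β+1) := Real.rpow_pos_of_pos (hdk's x) _
        have hQn : 0 < (k'-s)^(β+1) := Real.rpow_pos_of_pos hk'spos _
        have hKey : (d x x₀ + k)^α * (d x x₀+k')^β * (k'-s)^(β+1)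
            ≤ k'^(α+β) * (d x x₀ + k' - s)^(β+1) := by
          have h1 : (d x x₀ + k)^α ≤ (d x x₀ + k')^α :=
            Real.rpow_le_rpow (hdk x).le (by linarith [hk'k]) hα0.le
          have h2 : (d x x₀+k')^α * (d x x₀+k')^β = (d x x₀+k')^(α+β) :=
            (Real.rpow_add (hdk' x) _ _).symm
          have h3 := key4 (α := α) (β := β) (s := s) (k' := k') (t := d x x₀ + k')
            hα0.le hα hβ hs0 hk's (by linarith [hdd0 x])
          calc (d x x₀ + k)^α * (d x x₀+k')^β * (k'-s)^(β+1)
              ≤ (d x x₀ + k')^α * (d x x₀+k')^β * (k'-s)^(β+1) :=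
                mul_le_mul_of_nonneg_right (mul_le_mul_of_nonneg_right h1 hC.le) hQn.le
            _ = (d x x₀+k')^(α+β) * (k'-s)^(β+1) := by rw [h2]
            _ ≤ k'^(α+β) * (d x x₀ + k' - s)^(β+1) := by
                rw [show d x x₀ + k' - s = (d x x₀ + k') - s by ring]
                exact h3
        rw [Real.rpow_neg (hdk's x).le]
        simp only [hwdef, hg'def]
        rw [Real.rpow_neg (hdk x).le, Real.rpow_neg (hdk' x).le]
        rw [show k'^(α+β)/(k'-s)^(β+1) * (((d x x₀ + k)^α)⁻¹ * ((d x x₀+k')^β)⁻¹)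
            = k'^(α+β) / ((k'-s)^(β+1) * ((d x x₀ + k)^α * (d x x₀+k')^β)) by
              field_simp]
        rw [inv_eq_one_div, div_le_div_iff₀ hX (by positivity)]
        nlinarith [hKey]
      have hθc : θ * c₀ = β*C₀/p * (k'^(α+β)/(k'-s)^(β+1)) := by
        rw [hθdef]
        field_simp
      have hmain1 : β*C₀/p * ((d x x₀ + k' - s) ^ (-(β+1))) ≤ θ*c₀ * w x := by
        rw [hθc, mul_assoc]
        exact mul_le_mul_of_nonneg_left hWw (by positivity)
      have expand : (1/p) * (v x ^ p * ((β * (d x x₀ + k' - s) ^ (-(β+1)) + g' x / R) * (C₀ * μ x)))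
          = (β*C₀/p * ((d x x₀ + k' - s) ^ (-(β+1)))) * (v x ^ p * μ x)
            + C₀/(p*R) * (v x ^ p * g' x * μ x) := by
        field_simp
      have hfin1 : (β*C₀/p * ((d x x₀ + k' - s) ^ (-(β+1)))) * (v x ^ p * μ x)
          ≤ (θ*c₀ * w x) * (v x ^ p * μ x) :=
        mul_le_mul_of_nonneg_right hmain1
          (mul_nonneg (Real.rpow_nonneg (hvnonneg x) _) (hμ x).le)
      have e2 : (θ*c₀ * w x) * (v x ^ p * μ x) = θ * c₀ * (v x ^ p * w x * μ x) := by ring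
      rw [expand]
      linarith
    have hsTw : ∑ x ∈ T, v x ^ p * w x * μ x ≤ Ttot :=
      Summable.sum_le_tsum T (fun x _ => hterm_nonneg' x) hTsum
    have hsTg : ∑ x ∈ T, v x ^ p * g' x * μ x ≤ S' :=
      Summable.sum_le_tsum T (fun x _ => hterm_nonneg x) hS'sum
    calc c₀ * ∑ x ∈ F, v x ^ p * w x * (1 - d x x₀ / R) * μ x
        ≤ ∑ x ∈ T, φ x * (μ x * (V x * v x)) := stepAB
      _ ≤ ∑ x ∈ T, φ x * (∑ y ∈ T, ω x y * (v y - v x)) := stepC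
      _ = (1/2) * ∑ x ∈ T, ∑ y ∈ T, ω x y * ((v y - v x) * (φ x - φ y)) := hGreen
      _ ≤ (1/p) * ∑ x ∈ T, ∑ y ∈ T, ω x y * (|gR y - gR x| * v x ^ p) := stepD2
      _ ≤ (1/p) * ∑ x ∈ T, v x ^ p * ((β * (d x x₀ + k' - s) ^ (-(β+1)) + g' x / R) * (C₀ * μ x)) :=
          mul_le_mul_of_nonneg_left stepE (by positivity)
      _ ≤ θ * c₀ * ∑ x ∈ T, v x ^ p * w x * μ x
            + C₀/(p*R) * ∑ x ∈ T, v x ^ p * g' x * μ x := stepF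
      _ ≤ θ * c₀ * Ttot + C₀ * S' / (p * R) := by
          have h1 : θ * c₀ * ∑ x ∈ T, v x ^ p * w x * μ x ≤ θ * c₀ * Ttot :=
            mul_le_mul_of_nonneg_left hsTw (by positivity)
          have h2 : C₀/(p*R) * ∑ x ∈ T, v x ^ p * g' x * μ x ≤ C₀/(p*R) * S' :=
            mul_le_mul_of_nonneg_left hsTg (by positivity)
          have e : C₀/(p*R) * S' = C₀ * S' / (p*R) := by ring
          linarith
  -- pass to the limit R → ∞
  have hfinal : ∀ Fs : Finset G, c₀ * ∑ x ∈ Fs, v x ^ p * w x * μ x ≤ θ * c₀ * Ttot := by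
    intro Fs
    refine le_of_forall_pos_le_add (fun ε hε => ?_)
    set M := ∑ x ∈ Fs, v x ^ p * w x * μ x * d x x₀ with hMdef
    have hM0 : 0 ≤ M :=
      Finset.sum_nonneg (fun x _ => mul_nonneg (hterm_nonneg' x) (hdd0 x))
    set Cc := C₀ * S' / p + c₀ * M with hCcdef
    have hCc0 : 0 ≤ Cc := by
      have h1 : 0 ≤ C₀*S'/p := by positivity
      have h2 := mul_nonneg hc₀.le hM0
      rw [hCcdef]; linarith
    obtain ⟨R0, hR0⟩ : ∃ R0 : ℝ, ∀ x ∈ Fs, d x x₀ < R0 := by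
      rcases Fs.eq_empty_or_nonempty with he | hne
      · exact ⟨1, by simp [he]⟩
      · refine ⟨(Fs.sup' hne (fun z => d z x₀)) + 1, fun x hx => ?_⟩
        have h := Finset.le_sup' (s := Fs) (fun z => d z x₀) hx
        linarith
    set R := max R0 (Cc/ε + 1) with hRdef
    have hRR0 : R0 ≤ R := le_max_left _ _
    have hRc : Cc/ε + 1 ≤ R := le_max_right _ _
    have hR1 : 0 < R := lt_of_lt_of_le (by positivity : (0:ℝ) < Cc/ε + 1) hRc
    have hFlt : ∀ x ∈ Fs, d x x₀ < R := fun x hx => lt_of_lt_of_le (hR0 x hx) hRR0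
    have hmain := main R hR1 Fs hFlt
    have hC : Cc / R ≤ ε := by
      rw [div_le_iff₀ hR1]
      have h2 : Cc ≤ ε * (Cc/ε + 1) := by
        rw [mul_add, mul_one, mul_div_cancel₀ _ hε.ne']
        linarith
      calc Cc ≤ ε * (Cc/ε + 1) := h2
        _ ≤ ε * R := mul_le_mul_of_nonneg_left hRc hε.le
    have hsum_expand : ∑ x ∈ Fs, v x ^ p * w x * (1 - d x x₀ / R) * μ x
        = (∑ x ∈ Fs, v x ^ p * w x * μ x) - M / R := by
      rw [hMdef, Finset.sum_div, ← Finset.sum_sub_distrib]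
      refine Finset.sum_congr rfl (fun x _ => ?_)
      field_simp
    rw [hsum_expand] at hmain
    have hexp : c₀ * ((∑ x ∈ Fs, v x ^ p * w x * μ x) - M / R)
        = c₀ * (∑ x ∈ Fs, v x ^ p * w x * μ x) - c₀ * (M / R) := by ring
    rw [hexp] at hmain
    have hsplit : C₀ * S' / (p * R) + c₀ * (M / R) = Cc / R := by
      rw [hCcdef]; field_simp
    linarith
  have hTle : Ttot ≤ θ * Ttot := by
    refine Summable.tsum_le_of_sum_le hTsum (fun Fs => ?_)
    have h := hfinal Fs
    have e : θ * c₀ * Ttot = c₀ * (θ * Ttot) := by ring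
    rw [e] at h
    exact (mul_le_mul_iff_of_pos_left hc₀).mp h
  have hT0 : Ttot = 0 := by nlinarith [hTtot0, hθ1, hTle]
  intro x
  have hx := Summable.le_tsum hTsum x (fun y _ => hterm_nonneg' y)
  rw [← hTtotdef, hT0] at hx
  have hx0 : v x ^ p * w x * μ x = 0 := le_antisymm hx (hterm_nonneg' x)
  have hvp : v x ^ p = 0 := by
    have h1 : 0 < w x * μ x := mul_pos (hwpos x) (hμ x)
    by_contra hne
    have h2 : 0 < v x ^ p :=
      lt_of_le_of_ne (Real.rpow_nonneg (hvnonneg x) p) (Ne.symm hne)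
    nlinarith [mul_pos h2 h1]
  have hv0 : v x = 0 := by
    rw [Real.rpow_eq_zero_iff_of_nonneg (hvnonneg x)] at hvp
    exact hvp.1
  have : |u x| = 0 := by rw [hvdef] at hv0; exact hv0
  exact abs_eq_zero.mp this
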